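/- Let k ≥ 1 be an integer and let δ > 0, ε > 0 and c > 0 be real numbers. Then there exist c′ > 0 and n₀ such that for all n ≥ n₀ the following holds. Suppose H is a k-uniform hypergraph on n vertices with δ_{k−1}(H) ≥ (δ+ε)n, and m₁, …, m_t are positive integers with m_i ≥ cn for every 1 ≤ i ≤ t and m₁ + ⋯ + m_t = n. Then among all ordered partitions V(H) = V₁ ∪ ⋯ ∪ V_t with |V_i| = m_i for every i, the proportion of partitions failing to satisfy 'δ_{k−1}(V_i) ≥ (δ + 2ε/3)m_i for every 1 ≤ i ≤ t' is at most e^{−c′n}. -/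

import Mathlib

open scoped Classical

open Finset


-- step lemma
lemma hyp_step (N M m j : ℕ) (γ : ℝ) (hγ : 0 ≤ γ) (hjm : j < m)
    (h : (1+γ) * ((j:ℝ)+1) * ((M:ℝ) - (m:ℝ) + (j:ℝ) + 1) ≤ ((N:ℝ) - j) * ((m:ℝ) - j)) :
    (1+γ) * ((N.choose j * M.choose (m-j) : ℕ) : ℝ)
      ≤ ((N.choose (j+1) * M.choose (m-j-1) : ℕ) : ℝ) := by
  by_cases h0 : N.choose j * M.choose (m-j) = 0
  · simp [h0]; positivity
  have hNj : j ≤ N := by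
    by_contra hh; push_neg at hh
    simp [Nat.choose_eq_zero_of_lt hh] at h0
  have hMj : m - j ≤ M := by
    by_contra hh; push_neg at hh
    simp [Nat.choose_eq_zero_of_lt hh] at h0
  -- identities
  have e1 : N.choose (j+1) * (j+1) = N.choose j * (N - j) := Nat.choose_succ_right_eq N j
  have e2 : M.choose (m-j-1+1) * (m-j-1+1) = M.choose (m-j-1) * (M - (m-j-1)) :=
    Nat.choose_succ_right_eq M (m-j-1)
  have hmj1 : m - j - 1 + 1 = m - j := by omega
  rw [hmj1] at e2
  -- cast to ℝ
  have c1 : (N.choose (j+1) : ℝ) * ((j:ℝ)+1) = (N.choose j : ℝ) * ((N:ℝ) - j) := by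
    have := congrArg (fun x : ℕ => (x : ℝ)) e1
    push_cast [Nat.cast_sub hNj] at this
    linarith [this]
  have c2 : (M.choose (m-j) : ℝ) * ((m:ℝ) - j) = (M.choose (m-j-1) : ℝ) * ((M:ℝ) - (m:ℝ) + j + 1) := by
    have := congrArg (fun x : ℕ => (x : ℝ)) e2
    have h1 : m - j - 1 + 1 ≤ M := by omega
    have h2 : ((m - j : ℕ) : ℝ) = (m:ℝ) - j := by
      push_cast [Nat.cast_sub hjm.le]; ring
    have h3 : ((M - (m-j-1) : ℕ) : ℝ) = (M:ℝ) - (m:ℝ) + j + 1 := by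
      have : m - j - 1 ≤ M := by omega
      push_cast [Nat.cast_sub this]
      have : ((m - j - 1 : ℕ) : ℝ) = (m:ℝ) - j - 1 := by
        push_cast [Nat.cast_sub (by omega : 1 ≤ m - j), Nat.cast_sub hjm.le]; ring
      rw [this]; ring
    push_cast at this
    rw [h2, h3] at this; linarith [this]
  -- positivity of pieces
  have hA : (0:ℝ) < ((j:ℝ)+1) * ((M:ℝ) - (m:ℝ) + j + 1) := by
    have : (1:ℝ) ≤ (M:ℝ) - (m:ℝ) + j + 1 := by
      have : (m:ℝ) - j ≤ M := by
        have := hMj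
        have h2 : ((m - j : ℕ) : ℝ) = (m:ℝ) - j := by push_cast [Nat.cast_sub hjm.le]; ring
        calc (m:ℝ) - j = ((m-j:ℕ):ℝ) := h2.symm
          _ ≤ M := by exact_mod_cast hMj
      linarith
    nlinarith [Nat.cast_nonneg (α := ℝ) j]
  have hT : (0:ℝ) ≤ (N.choose j * M.choose (m-j) : ℕ) := Nat.cast_nonneg _
  -- main computation
  have key : ((N.choose (j+1) * M.choose (m-j-1) : ℕ) : ℝ) * (((j:ℝ)+1) * ((M:ℝ) - (m:ℝ) + j + 1))
      = ((N.choose j * M.choose (m-j) : ℕ) : ℝ) * (((N:ℝ) - j) * ((m:ℝ) - j)) := by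
    push_cast
    linear_combination ((M.choose (m-j-1) : ℝ) * ((M:ℝ)-(m:ℝ)+(j:ℝ)+1)) * c1 - ((N:ℝ)-(j:ℝ)) * (N.choose j : ℝ) * c2
  have step : (1+γ) * ((N.choose j * M.choose (m-j) : ℕ) : ℝ) * (((j:ℝ)+1) * ((M:ℝ) - (m:ℝ) + j + 1))
      ≤ ((N.choose (j+1) * M.choose (m-j-1) : ℕ) : ℝ) * (((j:ℝ)+1) * ((M:ℝ) - (m:ℝ) + j + 1)) := by
    rw [key]
    calc (1+γ) * ((N.choose j * M.choose (m-j) : ℕ) : ℝ) * (((j:ℝ)+1) * ((M:ℝ) - (m:ℝ) + j + 1))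
        = ((N.choose j * M.choose (m-j) : ℕ) : ℝ) * ((1+γ) * ((j:ℝ)+1) * ((M:ℝ) - (m:ℝ) + j + 1)) := by ring
      _ ≤ ((N.choose j * M.choose (m-j) : ℕ) : ℝ) * (((N:ℝ) - j) * ((m:ℝ) - j)) :=
          mul_le_mul_of_nonneg_left h hT
  exact le_of_mul_le_mul_right step hA

lemma hyp_tail (N M m J j₀ : ℕ) (γ : ℝ) (hγ : 0 < γ) (hJ : J < j₀) (hj₀m : j₀ ≤ m)
    (hstep : ∀ j < j₀, (1+γ) * ((j:ℝ)+1) * ((M:ℝ) - (m:ℝ) + (j:ℝ) + 1) ≤ ((N:ℝ) - j) * ((m:ℝ) - j)) :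
    (∑ j ∈ Finset.range (J+1), ((N.choose j * M.choose (m-j) : ℕ) : ℝ)) * (1+γ)^(j₀-J)
      ≤ ((J:ℝ)+1) * ((N+M).choose m : ℝ) := by
  set T : ℕ → ℝ := fun j => ((N.choose j * M.choose (m-j) : ℕ) : ℝ) with hT
  have hTnn : ∀ j, 0 ≤ T j := fun j => Nat.cast_nonneg _
  have step : ∀ j < j₀, (1+γ) * T j ≤ T (j+1) := by
    intro j hj
    exact hyp_step N M m j γ hγ.le (lt_of_lt_of_le hj hj₀m) (hstep j hj)
  have mono : ∀ j < j₀, T j ≤ T (j+1) := by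
    intro j hj
    calc T j = 1 * T j := (one_mul _).symm
      _ ≤ (1+γ) * T j := mul_le_mul_of_nonneg_right (by linarith) (hTnn j)
      _ ≤ T (j+1) := step j hj
  have mono' : ∀ a b, a ≤ b → b ≤ j₀ → T a ≤ T b := by
    intro a b hab hb
    induction b, hab using Nat.le_induction with
    | base => exact le_refl _
    | succ b hab ih =>
        exact le_trans (ih (by omega)) (mono b (by omega))
  have iter : ∀ d j, j + d ≤ j₀ → (1+γ)^d * T j ≤ T (j+d) := by
    intro d
    induction d with
    | zero => intro j _; simp
    | succ d ih =>
        intro j hjd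
        have h1 : (1+γ)^d * T j ≤ T (j+d) := ih j (by omega)
        calc (1+γ)^(d+1) * T j = (1+γ) * ((1+γ)^d * T j) := by ring
          _ ≤ (1+γ) * T (j+d) := mul_le_mul_of_nonneg_left h1 (by linarith)
          _ ≤ T (j+d+1) := step (j+d) (by omega)
  have hsum : (∑ j ∈ Finset.range (J+1), T j) ≤ ((J:ℝ)+1) * T J := by
    calc (∑ j ∈ Finset.range (J+1), T j) ≤ ∑ _j ∈ Finset.range (J+1), T J := by
          apply Finset.sum_le_sum
          intro j hj
          exact mono' j J (by simpa using Nat.lt_succ_iff.mp (Finset.mem_range.mp hj)) hJ.le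
      _ = ((J:ℝ)+1) * T J := by
          rw [Finset.sum_const, Finset.card_range]; push_cast; ring
  have hiter : (1+γ)^(j₀-J) * T J ≤ T j₀ := by
    have := iter (j₀ - J) J (by omega)
    rwa [show J + (j₀ - J) = j₀ by omega] at this
  have hvdm : T j₀ ≤ ((N+M).choose m : ℝ) := by
    have : N.choose j₀ * M.choose (m - j₀) ≤ (N+M).choose m := by
      rw [Nat.add_choose_eq]
      exact Finset.single_le_sum (f := fun ij : ℕ × ℕ => N.choose ij.1 * M.choose ij.2) (a := (j₀, m - j₀))
        (fun i _ => Nat.zero_le _)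
        (Finset.HasAntidiagonal.mem_antidiagonal.mpr (by omega))
    simp only [hT]
    exact_mod_cast this
  have hpow : (0:ℝ) < (1+γ)^(j₀-J) := by positivity
  calc (∑ j ∈ Finset.range (J+1), T j) * (1+γ)^(j₀-J)
      ≤ (((J:ℝ)+1) * T J) * (1+γ)^(j₀-J) := by
        apply mul_le_mul_of_nonneg_right hsum hpow.le
    _ = ((J:ℝ)+1) * ((1+γ)^(j₀-J) * T J) := by ring
    _ ≤ ((J:ℝ)+1) * T j₀ := by
        apply mul_le_mul_of_nonneg_left hiter (by positivity)
    _ ≤ ((J:ℝ)+1) * ((N+M).choose m : ℝ) := by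
        apply mul_le_mul_of_nonneg_left hvdm (by positivity)

lemma count_inter {α : Type*} [Fintype α] [DecidableEq α] (Nset : Finset α) (mm j : ℕ) :
    ((Finset.powersetCard mm (Finset.univ : Finset α)).filter
        (fun S => (S ∩ Nset).card = j)).card
      ≤ Nset.card.choose j * ((Finset.univ \ Nset).card).choose (mm - j) := by
  have h := Finset.card_le_card_of_injOn
    (f := fun S : Finset α => (S ∩ Nset, S \ Nset))
    (s := (Finset.powersetCard mm (Finset.univ : Finset α)).filter
        (fun S => (S ∩ Nset).card = j))
    (t := (Finset.powersetCard j Nset) ×ˢ (Finset.powersetCard (mm - j) (Finset.univ \ Nset)))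
    ?_ ?_
  · calc _ ≤ _ := h
      _ = Nset.card.choose j * ((Finset.univ \ Nset).card).choose (mm - j) := by
        rw [Finset.card_product, Finset.card_powersetCard, Finset.card_powersetCard]
  · intro S hS
    rw [Finset.mem_coe, Finset.mem_filter, Finset.mem_powersetCard_univ] at hS
    obtain ⟨hcard, hj⟩ := hS
    rw [Finset.mem_coe, Finset.mem_product]
    constructor
    · exact Finset.mem_powersetCard.mpr ⟨Finset.inter_subset_right, hj⟩
    · refine Finset.mem_powersetCard.mpr ⟨Finset.sdiff_subset_sdiff (Finset.subset_univ S) le_rfl, ?_⟩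
      show (S \ Nset).card = mm - j
      have := Finset.card_inter_add_card_sdiff S Nset
      omega
  · intro a _ b _ hab
    simp only [Prod.mk.injEq] at hab
    have : a \ Nset ∪ a ∩ Nset = b \ Nset ∪ b ∩ Nset := by rw [hab.1, hab.2]
    rwa [Finset.sdiff_union_inter, Finset.sdiff_union_inter] at this

lemma exists_perm {α : Type*} [Fintype α] [DecidableEq α] (S S' : Finset α)
    (h : S.card = S'.card) : ∃ σ : Equiv.Perm α, ∀ v, v ∈ S ↔ σ v ∈ S' := by
  have e₁ : {x // x ∈ S} ≃ {x // x ∈ S'} :=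
    Fintype.equivOfCardEq (by simpa [Fintype.card_coe] using h)
  have e₂ : {x // ¬ x ∈ S} ≃ {x // ¬ x ∈ S'} :=
    Fintype.equivOfCardEq (by
      rw [Fintype.card_subtype_compl, Fintype.card_subtype_compl]
      simp [Fintype.card_coe, h])
  refine ⟨((Equiv.sumCompl (· ∈ S)).symm.trans ((e₁.sumCongr e₂).trans
      (Equiv.sumCompl (· ∈ S')))), fun v => ?_⟩
  by_cases hv : v ∈ S
  · simp only [Equiv.trans_apply, Equiv.sumCompl_symm_apply_of_pos hv,
      Equiv.sumCongr_apply, Sum.map_inl, Equiv.sumCompl_apply_inl]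
    exact iff_of_true hv (e₁ ⟨v, hv⟩).2
  · simp only [Equiv.trans_apply, Equiv.sumCompl_symm_apply_of_neg hv,
      Equiv.sumCongr_apply, Sum.map_inr, Equiv.sumCompl_apply_inr]
    exact iff_of_false hv (e₂ ⟨v, hv⟩).2

lemma cardA_mono {n t : ℕ} (m : Fin t → ℕ) (i : Fin t) (S S' : Finset (Fin n))
    (σ : Equiv.Perm (Fin n)) (hσ : ∀ v, v ∈ S ↔ σ v ∈ S') :
    (((Finset.univ : Finset (Fin n → Fin t)).filter
        (fun φ => ∀ j, (Finset.univ.filter (fun v => φ v = j)).card = m j)).filter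
      (fun φ => Finset.univ.filter (fun v => φ v = i) = S)).card
    ≤ (((Finset.univ : Finset (Fin n → Fin t)).filter
        (fun φ => ∀ j, (Finset.univ.filter (fun v => φ v = j)).card = m j)).filter
      (fun φ => Finset.univ.filter (fun v => φ v = i) = S')).card := by
  apply Finset.card_le_card_of_injOn (fun φ => φ ∘ ⇑σ.symm)
  · intro φ hφ
    rw [Finset.mem_coe, Finset.mem_filter, Finset.mem_filter] at hφ ⊢
    obtain ⟨⟨_, hvalid⟩, hfib⟩ := hφ
    have key : ∀ j : Fin t, Finset.univ.filter (fun v => (φ ∘ ⇑σ.symm) v = j)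
        = (Finset.univ.filter (fun v => φ v = j)).map σ.toEmbedding := by
      intro j
      ext v
      simp [Finset.mem_map_equiv]
    refine ⟨⟨Finset.mem_univ _, ?_⟩, ?_⟩
    · intro j
      rw [key j, Finset.card_map]
      exact hvalid j
    · rw [key i, hfib]
      ext v
      rw [Finset.mem_map_equiv]
      constructor
      · intro hv
        have := (hσ (σ.symm v)).mp hv
        simpa using this
      · intro hv
        exact (hσ (σ.symm v)).mpr (by simpa using hv)
  · intro a _ b _ hab
    funext w
    have := congrFun hab (σ w)
    simpa using this

lemma cardA_eq {n t : ℕ} (m : Fin t → ℕ) (i : Fin t) (S S' : Finset (Fin n))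
    (h : S.card = S'.card) :
    (((Finset.univ : Finset (Fin n → Fin t)).filter
        (fun φ => ∀ j, (Finset.univ.filter (fun v => φ v = j)).card = m j)).filter
      (fun φ => Finset.univ.filter (fun v => φ v = i) = S)).card
    = (((Finset.univ : Finset (Fin n → Fin t)).filter
        (fun φ => ∀ j, (Finset.univ.filter (fun v => φ v = j)).card = m j)).filter
      (fun φ => Finset.univ.filter (fun v => φ v = i) = S')).card := by
  obtain ⟨σ, hσ⟩ := exists_perm S S' h
  have hσ' : ∀ v, v ∈ S' ↔ σ.symm v ∈ S := by
    intro v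
    constructor
    · intro hv
      rw [hσ (σ.symm v)]
      simpa using hv
    · intro hv
      have := (hσ (σ.symm v)).mp hv
      simpa using this
  exact le_antisymm (cardA_mono m i S S' σ hσ)
    (cardA_mono m i S' S σ.symm (fun v => hσ' v))

lemma fiber_count {n t : ℕ} (m : Fin t → ℕ) (i : Fin t) (P : Finset (Fin n) → Prop)
    [DecidablePred P] :
    ((((Finset.univ : Finset (Fin n → Fin t)).filter
        (fun φ => ∀ j, (Finset.univ.filter (fun v => φ v = j)).card = m j)).filter
      (fun φ => P (Finset.univ.filter (fun v => φ v = i)))).card : ℕ) * n.choose (m i)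
    = ((Finset.powersetCard (m i) (Finset.univ : Finset (Fin n))).filter P).card *
      ((Finset.univ : Finset (Fin n → Fin t)).filter
        (fun φ => ∀ j, (Finset.univ.filter (fun v => φ v = j)).card = m j)).card := by
  set Valid := ((Finset.univ : Finset (Fin n → Fin t)).filter
      (fun φ => ∀ j, (Finset.univ.filter (fun v => φ v = j)).card = m j)) with hValid
  set fib : (Fin n → Fin t) → Finset (Fin n) :=
      fun φ => Finset.univ.filter (fun v => φ v = i) with hfib
  set pC := Finset.powersetCard (m i) (Finset.univ : Finset (Fin n)) with hpC
  have hfibmem : ∀ φ ∈ Valid, fib φ ∈ pC := by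
    intro φ hφ
    rw [hValid, Finset.mem_filter] at hφ
    exact Finset.mem_powersetCard_univ.mpr (hφ.2 i)
  have hAeq : ∀ S ∈ pC, ∀ S' ∈ pC,
      (Valid.filter (fun φ => fib φ = S)).card = (Valid.filter (fun φ => fib φ = S')).card := by
    intro S hS S' hS'
    exact cardA_eq m i S S'
      ((Finset.mem_powersetCard_univ.mp hS).trans (Finset.mem_powersetCard_univ.mp hS').symm)
  have h1 : (Valid.filter (fun φ => P (fib φ))).card
      = ∑ S ∈ pC.filter P, (Valid.filter (fun φ => fib φ = S)).card := by
    rw [Finset.card_eq_sum_card_fiberwise (f := fib) (t := pC.filter P)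
      (fun φ hφ => by
        rw [Finset.mem_coe, Finset.mem_filter] at hφ
        exact Finset.mem_filter.mpr ⟨hfibmem φ hφ.1, hφ.2⟩)]
    apply Finset.sum_congr rfl
    intro S hS
    have hPS : P S := (Finset.mem_filter.mp hS).2
    congr 1
    ext φ
    simp only [Finset.mem_filter]
    constructor
    · rintro ⟨⟨h1, _⟩, h3⟩; exact ⟨h1, h3⟩
    · rintro ⟨h1, h3⟩; exact ⟨⟨h1, h3 ▸ hPS⟩, h3⟩
  have h2 : Valid.card = ∑ S ∈ pC, (Valid.filter (fun φ => fib φ = S)).card :=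
    Finset.card_eq_sum_card_fiberwise hfibmem
  have hC : n.choose (m i) = pC.card := by
    rw [hpC, Finset.card_powersetCard, Finset.card_univ, Fintype.card_fin]
  rw [h1, h2, hC]
  rw [Finset.card_eq_sum_ones (pC.filter P), Finset.card_eq_sum_ones pC]
  rw [Finset.sum_mul_sum, Finset.sum_mul_sum]
  apply Finset.sum_congr rfl
  intro S hS
  apply Finset.sum_congr rfl
  intro S' hS'
  rw [mul_one, one_mul]
  exact hAeq S (Finset.filter_subset _ _ hS) S' hS'

lemma ratio_bound (δ ε c nn Nr mi j γ : ℝ)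
    (hδ : 0 < δ) (hε : 0 < ε) (hc : 0 < c) (hγ : γ = c*ε/144)
    (hn1 : 1 ≤ nn) (h48 : 48 ≤ ε*c*nn)
    (hNr : (δ+ε)*nn ≤ Nr) (hNrn : Nr ≤ nn)
    (hmub : mi ≤ nn) (hmlb : c*nn ≤ mi)
    (hjq : j ≤ (δ+5*ε/6)*mi) (hj0 : 0 ≤ j) (hjn : j ≤ nn) :
    (1+γ)*(j+1)*(nn-Nr-mi+j+1) ≤ (Nr-j)*(mi-j) := by
  have hmi0 : 0 ≤ mi := le_trans (by positivity) hmlb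
  have hNr0 : 0 ≤ Nr := le_trans (by positivity) hNr
  have hγ0 : 0 < γ := by rw [hγ]; positivity
  have h1 : (δ+ε)*nn*mi ≤ Nr*mi := mul_le_mul_of_nonneg_right hNr hmi0
  have h2 : j*nn ≤ (δ+5*ε/6)*mi*nn :=
    mul_le_mul_of_nonneg_right hjq (by linarith)
  have h4 : (ε/6)*nn*(c*nn) ≤ (ε/6)*nn*mi :=
    mul_le_mul_of_nonneg_left hmlb (by positivity)
  have h5 : (ε*c/6)*nn^2 ≤ Nr*mi - j*nn := by nlinarith [h1, h2, h4]
  have hAlb : (ε*c/6)*nn^2 - 4*nn ≤ (Nr-j)*(mi-j) - (j+1)*(nn-Nr-mi+j+1) := by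
    nlinarith [h5]
  have hB : γ*(j+1)*(nn-Nr-mi+j+1) ≤ (ε*c/24)*nn^2 := by
    rcases le_or_gt (nn-Nr-mi+j+1) 0 with hZ | hZ
    · have hle : γ*(j+1)*(nn-Nr-mi+j+1) ≤ 0 :=
        mul_nonpos_of_nonneg_of_nonpos (by positivity) hZ
      have : (0:ℝ) ≤ (ε*c/24)*nn^2 := by positivity
      linarith
    · have hj1 : j+1 ≤ 2*nn := by linarith
      have hZub : nn-Nr-mi+j+1 ≤ 3*nn := by linarith
      have : γ*(j+1)*(nn-Nr-mi+j+1) ≤ γ*(2*nn)*(3*nn) := by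
        apply mul_le_mul (mul_le_mul_of_nonneg_left hj1 hγ0.le) hZub hZ.le (by positivity)
      have heq : γ*(2*nn)*(3*nn) = (ε*c/24)*nn^2 := by rw [hγ]; ring
      linarith
  nlinarith [hAlb, hB, h48, hn1]

lemma deg_le_nbhd {n k : ℕ} (H : Finset (Finset (Fin n))) (hH : ∀ f ∈ H, f.card = k)
    (hk : 1 ≤ k) (X : Finset (Fin n)) (hX : X.card = k-1) :
    (H.filter (fun f => X ⊆ f)).card ≤ (Finset.univ.filter (fun v => insert v X ∈ H)).card := by
  have hsub : H.filter (fun f => X ⊆ f) ⊆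
      (Finset.univ.filter (fun v => insert v X ∈ H)).image (fun v => insert v X) := by
    intro f hf
    rw [Finset.mem_filter] at hf
    obtain ⟨hfH, hXf⟩ := hf
    have hfc : f.card = k := hH f hfH
    have hne : (f \ X).Nonempty := by
      rw [← Finset.card_pos, Finset.card_sdiff_of_subset hXf, hfc, hX]; omega
    obtain ⟨v, hv⟩ := hne
    have hvf : v ∈ f := (Finset.mem_sdiff.mp hv).1
    have hvX : v ∉ X := (Finset.mem_sdiff.mp hv).2
    have hins : insert v X = f := by
      apply Finset.eq_of_subset_of_card_le (Finset.insert_subset hvf hXf)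
      rw [Finset.card_insert_of_notMem hvX, hX, hfc]; omega
    rw [Finset.mem_image]
    exact ⟨v, Finset.mem_filter.mpr ⟨Finset.mem_univ _, by rw [hins]; exact hfH⟩, hins⟩
  exact le_trans (Finset.card_le_card hsub) Finset.card_image_le

lemma exp_beats_poly (α c : ℝ) (hα : 0 < α) (hc : 0 < c) (k : ℕ) :
    ∀ᶠ (n : ℕ) in Filter.atTop, (1/c)*((n:ℝ)+1)^k ≤ Real.exp (α * n) := by
  have hF := Real.tendsto_pow_mul_exp_neg_atTop_nhds_zero k
  have hεt : (0:ℝ) < (α^k * Real.exp (-α)) * c := by positivity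
  have h1 : ∀ᶠ x : ℝ in Filter.atTop, x^k * Real.exp (-x) ≤ (α^k * Real.exp (-α)) * c :=
    hF.eventually (eventually_le_nhds hεt)
  have h2 : Filter.Tendsto (fun n : ℕ => α*((n:ℝ)+1)) Filter.atTop Filter.atTop := by
    apply Filter.Tendsto.const_mul_atTop hα
    exact Filter.tendsto_atTop_add_const_right _ 1 tendsto_natCast_atTop_atTop
  filter_upwards [h2.eventually h1] with n hn
  have hkey : (α*((n:ℝ)+1))^k * Real.exp (-(α*((n:ℝ)+1)))
      = (α^k * Real.exp (-α)) * (((n:ℝ)+1)^k * Real.exp (-(α*n))) := by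
    rw [mul_pow, show -(α*((n:ℝ)+1)) = (-α) + (-(α*n)) by ring, Real.exp_add]; ring
  have hpos : (0:ℝ) < α^k * Real.exp (-α) := by positivity
  have hQ : ((n:ℝ)+1)^k * Real.exp (-(α*n)) ≤ c := by
    have := hn
    rw [hkey] at this
    exact le_of_mul_le_mul_left this hpos
  have hexp : (0:ℝ) < Real.exp (α*n) := Real.exp_pos _
  have : ((n:ℝ)+1)^k ≤ c * Real.exp (α*n) := by
    rw [Real.exp_neg] at hQ
    calc ((n:ℝ)+1)^k = (((n:ℝ)+1)^k * (Real.exp (α*n))⁻¹) * Real.exp (α*n) := by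
          field_simp
      _ ≤ c * Real.exp (α*n) := mul_le_mul_of_nonneg_right hQ hexp.le
  calc (1/c)*((n:ℝ)+1)^k ≤ (1/c)*(c * Real.exp (α*n)) :=
        mul_le_mul_of_nonneg_left this (by positivity)
    _ = Real.exp (α*n) := by field_simp

set_option maxHeartbeats 1600000 in
theorem random_partition_degrees (k : ℕ) (hk : 1 ≤ k)
    (δ ε c : ℝ) (hδ : 0 < δ) (hε : 0 < ε) (hc : 0 < c) :
    ∃ c' : ℝ, 0 < c' ∧ ∃ n₀ : ℕ, ∀ n : ℕ, n₀ ≤ n →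
      ∀ H : Finset (Finset (Fin n)), (∀ f ∈ H, f.card = k) →
      (∀ A : Finset (Fin n), A.card = k - 1 →
        (δ + ε) * n ≤ ((H.filter (fun f => A ⊆ f)).card : ℝ)) →
      ∀ t : ℕ, ∀ m : Fin t → ℕ,
        (∀ i, 0 < m i) → (∀ i, c * n ≤ (m i : ℝ)) → (∑ i, m i = n) →
        -- ordered partitions `V(H) = V₁ ∪ ⋯ ∪ V_t` with `|V_i| = m i`, encoded as
        -- functions `φ : Fin n → Fin t` whose fibers have the prescribed sizes
        ((((Finset.univ : Finset (Fin n → Fin t)).filter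
              (fun φ => ∀ i, (Finset.univ.filter (fun v => φ v = i)).card = m i)).filter
            (fun φ => ¬ ∀ i : Fin t, ∀ X : Finset (Fin n), X.card = k - 1 →
              (δ + 2 * ε / 3) * (m i : ℝ) ≤
                (((Finset.univ.filter (fun v => φ v = i)).filter
                  (fun v => insert v X ∈ H)).card : ℝ))).card : ℝ)
          ≤ Real.exp (-c' * n) *
            (((Finset.univ : Finset (Fin n → Fin t)).filter
              (fun φ => ∀ i, (Finset.univ.filter (fun v => φ v = i)).card = m i)).card : ℝ) := by
  
  set γ : ℝ := c*ε/144 with hγdef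
  have hγ0 : 0 < γ := by positivity
  set β : ℝ := Real.log (1+γ) with hβdef
  have hβ0 : 0 < β := Real.log_pos (by linarith)
  refine ⟨ε*c*β/12, by positivity, ?_⟩
  have hev : ∀ᶠ (n:ℕ) in Filter.atTop,
      (1 ≤ n ∧ k ≤ n ∧ (48:ℝ) ≤ ε*c*n) ∧ (1/c)*((n:ℝ)+1)^k ≤ Real.exp ((ε*c*β/12) * n) := by
    refine Filter.Eventually.and (Filter.Eventually.and ?_ (Filter.Eventually.and ?_ ?_)) ?_
    · exact Filter.eventually_ge_atTop 1
    · exact Filter.eventually_ge_atTop k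
    · have h2 : Filter.Tendsto (fun n:ℕ => ε*c*(n:ℝ)) Filter.atTop Filter.atTop := by
        apply Filter.Tendsto.const_mul_atTop (by positivity)
        exact tendsto_natCast_atTop_atTop
      exact h2.eventually_ge_atTop 48
    · exact exp_beats_poly _ c (by positivity) hc k
  obtain ⟨n₀, hn₀⟩ := Filter.eventually_atTop.mp hev
  refine ⟨n₀, ?_⟩
  intro n hn H hHcard hdeg t m hmpos hmlb hmsum
  obtain ⟨⟨hn1, hkn, h48⟩, hC6⟩ := hn₀ n hn
  have hn0R : (0:ℝ) < n := by exact_mod_cast hn1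
  set Valid := ((Finset.univ : Finset (Fin n → Fin t)).filter
      (fun φ => ∀ i, (Finset.univ.filter (fun v => φ v = i)).card = m i)) with hValid
  have ht1 : 0 < t := by
    by_contra h
    push_neg at h
    interval_cases t
    simp at hmsum
    omega
  have hmle : ∀ i, m i ≤ n := by
    intro i
    rw [← hmsum]
    exact Finset.single_le_sum (fun j _ => Nat.zero_le (m j)) (Finset.mem_univ i)
  have hc1 : c ≤ 1 := by
    have h1 := hmlb ⟨0, ht1⟩
    have h2 : ((m ⟨0, ht1⟩ : ℕ):ℝ) ≤ n := by exact_mod_cast hmle ⟨0, ht1⟩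
    nlinarith
  have hδε1 : δ+ε ≤ 1 := by
    obtain ⟨A, _, hAcard⟩ := Finset.exists_subset_card_eq (s := (Finset.univ : Finset (Fin n))) (n := k-1)
      (by rw [Finset.card_univ, Fintype.card_fin]; omega)
    have h1 := hdeg A hAcard
    have h2 := deg_le_nbhd H hHcard hk A hAcard
    have h3 : (Finset.univ.filter (fun v => insert v A ∈ H)).card ≤ n := by
      calc _ ≤ (Finset.univ : Finset (Fin n)).card := Finset.card_filter_le _ _
        _ = n := by simp
    have h4 : (δ+ε)*n ≤ (n:ℝ) := by
      calc (δ+ε)*n ≤ ((H.filter (fun f => A ⊆ f)).card : ℝ) := h1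
        _ ≤ ((Finset.univ.filter (fun v => insert v A ∈ H)).card : ℝ) := by exact_mod_cast h2
        _ ≤ n := by exact_mod_cast h3
    nlinarith
  set Pp : Fin t × Finset (Fin n) → Finset (Fin n) → Prop := fun p S =>
    ¬ ((δ + 2*ε/3) * (m p.1 : ℝ) ≤ ((S.filter (fun v => insert v p.2 ∈ H)).card : ℝ)) with hPp
  set G : Fin t × Finset (Fin n) → Finset (Fin n → Fin t) := fun p =>
    Valid.filter (fun φ => Pp p (Finset.univ.filter (fun v => φ v = p.1))) with hG
  set bigset := (Finset.univ : Finset (Fin t)) ×ˢ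
    (Finset.powersetCard (k-1) (Finset.univ : Finset (Fin n))) with hbig
  have hBadsub : Valid.filter
      (fun φ => ¬ ∀ i : Fin t, ∀ X : Finset (Fin n), X.card = k - 1 →
          (δ + 2 * ε / 3) * (m i : ℝ) ≤
            (((Finset.univ.filter (fun v => φ v = i)).filter
              (fun v => insert v X ∈ H)).card : ℝ))
      ⊆ bigset.biUnion G := by
    intro φ hφ
    rw [Finset.mem_filter] at hφ
    obtain ⟨hφV, hφbad⟩ := hφ
    push_neg at hφbad
    obtain ⟨i, X, hXcard, hineq⟩ := hφbad
    rw [Finset.mem_biUnion]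
    refine ⟨(i, X), ?_, ?_⟩
    · rw [hbig, Finset.mem_product]
      exact ⟨Finset.mem_univ _, Finset.mem_powersetCard_univ.mpr hXcard⟩
    · rw [hG]
      refine Finset.mem_filter.mpr ⟨hφV, ?_⟩
      rw [hPp]
      exact not_le.mpr hineq
  -- per pair bound
  have hper : ∀ p ∈ bigset, ((G p).card : ℝ)
      ≤ ((n:ℝ)+1) * Real.exp (-(β*((ε*c/6)*n))) * (Valid.card : ℝ) := by
    rintro ⟨i, X⟩ hp
    rw [hbig, Finset.mem_product] at hp
    have hXcard : X.card = k-1 := Finset.mem_powersetCard_univ.mp hp.2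
    set Nset := Finset.univ.filter (fun v => insert v X ∈ H) with hNset
    set Nr := Nset.card with hNr
    have hNrlb : (δ+ε)*n ≤ (Nr:ℝ) := le_trans (hdeg X hXcard)
      (by exact_mod_cast deg_le_nbhd H hHcard hk X hXcard)
    have hNrn : Nr ≤ n := by
      calc Nr ≤ (Finset.univ : Finset (Fin n)).card := Finset.card_filter_le _ _
        _ = n := by simp
    set mi := m i with hmi
    have hmiub : mi ≤ n := hmle i
    have hmiubR : (mi:ℝ) ≤ n := by exact_mod_cast hmiub
    have hmilb : c*n ≤ (mi:ℝ) := hmlb i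
    have hmi0R : (0:ℝ) < mi := lt_of_lt_of_le (by positivity) hmilb
    set J := Nat.floor ((δ+2*ε/3)*(mi:ℝ)) with hJdef
    set j₀ := Nat.ceil ((δ+5*ε/6)*(mi:ℝ)) with hj₀def
    have hJle : (J:ℝ) ≤ (δ+2*ε/3)*mi := Nat.floor_le (by positivity)
    have hj₀ge : (δ+5*ε/6)*(mi:ℝ) ≤ j₀ := Nat.le_ceil _
    have hj₀lt : (j₀:ℝ) < (δ+5*ε/6)*mi + 1 := Nat.ceil_lt_add_one (by positivity)
    have hεmi : (8:ℝ) ≤ (ε/6)*mi := by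
      have h6 : ε*(c*(n:ℝ)) ≤ ε*mi := mul_le_mul_of_nonneg_left hmilb hε.le
      linarith only [h6, h48]
    have hNrnR : (Nr:ℝ) ≤ n := by exact_mod_cast hNrn
    have hJj₀ : J < j₀ := by
      have hr : (J:ℝ) < j₀ := by linarith only [hJle, hj₀ge, hεmi]
      exact_mod_cast hr
    have hj₀mi : j₀ ≤ mi := by
      have hq' : (δ+5*ε/6)*(mi:ℝ) ≤ (1-ε/6)*mi :=
        mul_le_mul_of_nonneg_right (by linarith) hmi0R.le
      have hr : (j₀:ℝ) < mi := by linarith only [hj₀lt, hq', hεmi]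
      have := (Nat.cast_lt (α := ℝ)).mp hr
      omega
    have hεn : (48:ℝ) ≤ ε*n := by
      have h7 : (ε*(n:ℝ))*c ≤ (ε*(n:ℝ))*1 :=
        mul_le_mul_of_nonneg_left hc1 (mul_nonneg hε.le (Nat.cast_nonneg n))
      calc (48:ℝ) ≤ ε*c*n := h48
        _ = (ε*(n:ℝ))*c := by ring
        _ ≤ (ε*(n:ℝ))*1 := h7
        _ = ε*n := by ring
    have hj₀Nr : j₀ ≤ Nr := by
      have hq'n : (δ+5*ε/6)*(mi:ℝ) ≤ (δ+5*ε/6)*n :=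
        mul_le_mul_of_nonneg_left hmiubR (by positivity)
      have hr : (j₀:ℝ) < Nr := by linarith only [hj₀lt, hq'n, hNrlb, hεn]
      have := (Nat.cast_lt (α := ℝ)).mp hr
      omega
    have hcount := fiber_count (n := n) (t := t) m i (Pp (i, X))
    set pC := Finset.powersetCard mi (Finset.univ : Finset (Fin n)) with hpCdef
    have hbadSsub : (pC.filter (Pp (i,X))) ⊆ (Finset.range (J+1)).biUnion
        (fun j => pC.filter (fun S => (S ∩ Nset).card = j)) := by
      intro S hS
      rw [Finset.mem_filter] at hS
      obtain ⟨hSpC, hSP⟩ := hS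
      have hSN : S.filter (fun v => insert v X ∈ H) = S ∩ Nset := by
        ext v
        simp [hNset, Finset.mem_inter]
      rw [hPp] at hSP
      simp only [not_le] at hSP
      rw [hSN] at hSP
      have hle : (S ∩ Nset).card ≤ J := Nat.le_floor (le_of_lt hSP)
      exact Finset.mem_biUnion.mpr ⟨(S ∩ Nset).card,
        Finset.mem_range.mpr (Nat.lt_succ_of_le hle),
        Finset.mem_filter.mpr ⟨hSpC, rfl⟩⟩
    have hbadS : ((pC.filter (Pp (i,X))).card : ℝ)
        ≤ ∑ j ∈ Finset.range (J+1), ((Nr.choose j * (n - Nr).choose (mi - j) : ℕ) : ℝ) := by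
      have h1 := Finset.card_le_card hbadSsub
      have h2 := Finset.card_biUnion_le (s := Finset.range (J+1))
        (t := fun j => pC.filter (fun S => (S ∩ Nset).card = j))
      have h3 : ∀ j, (pC.filter (fun S => (S ∩ Nset).card = j)).card
          ≤ Nr.choose j * (n - Nr).choose (mi - j) := by
        intro j
        have hci := count_inter Nset mi j
        have hcompl : (Finset.univ \ Nset).card = n - Nr := by
          rw [Finset.card_sdiff_of_subset (Finset.subset_univ _)]
          simp [hNr]
        rwa [hcompl] at hci
      have hfin : (pC.filter (Pp (i,X))).card
          ≤ ∑ j ∈ Finset.range (J+1), Nr.choose j * (n-Nr).choose (mi-j) :=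
        le_trans h1 (le_trans h2 (Finset.sum_le_sum (fun j _ => h3 j)))
      exact_mod_cast hfin
    have hstep : ∀ j < j₀, (1+γ)*((j:ℝ)+1)*(((n-Nr:ℕ):ℝ) - mi + j + 1)
        ≤ ((Nr:ℝ)-j)*((mi:ℝ)-j) := by
      intro j hj
      have hjq : (j:ℝ) ≤ (δ+5*ε/6)*mi := by
        have hj1 : (j:ℝ)+1 ≤ j₀ := by exact_mod_cast Nat.succ_le_of_lt hj
        linarith only [hj1, hj₀lt]
      have hMcast : ((n-Nr:ℕ):ℝ) = (n:ℝ) - Nr := by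
        rw [Nat.cast_sub hNrn]
      rw [hMcast]
      have hjn : (j:ℝ) ≤ n := by
        have hj2 : j ≤ n := le_trans (le_of_lt hj) (le_trans hj₀mi hmiub)
        exact_mod_cast hj2
      exact ratio_bound δ ε c n Nr mi j γ hδ hε hc hγdef (by exact_mod_cast hn1) h48
        hNrlb hNrnR hmiubR hmilb hjq (by positivity) hjn
    have htail := hyp_tail Nr (n-Nr) mi J j₀ γ hγ0 hJj₀ hj₀mi hstep
    rw [Nat.add_sub_cancel' hNrn] at htail
    have hCpos : (0:ℝ) < (n.choose mi : ℝ) := by exact_mod_cast Nat.choose_pos hmiub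
    have hVnn : (0:ℝ) ≤ (Valid.card : ℝ) := Nat.cast_nonneg _
    have hGX : G (i,X) = Valid.filter (fun φ => Pp (i,X)
        (Finset.univ.filter (fun v => φ v = i))) := by rw [hG]

    have hGc : ((G (i,X)).card : ℝ) * (n.choose mi : ℝ)
        = ((pC.filter (Pp (i,X))).card : ℝ) * (Valid.card : ℝ) := by
      rw [hGX]
      exact_mod_cast hcount
    set D := j₀ - J with hD
    have hpowpos : (0:ℝ) < (1+γ)^D := by positivity
    have hchain : ((G (i,X)).card : ℝ) * (1+γ)^D ≤ ((J:ℝ)+1) * (Valid.card:ℝ) := by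
      have h2 : ((pC.filter (Pp (i,X))).card:ℝ)*(1+γ)^D ≤ ((J:ℝ)+1)*(n.choose mi:ℝ) :=
        le_trans (mul_le_mul_of_nonneg_right hbadS hpowpos.le) htail
      have h3 : ((G (i,X)).card : ℝ) * (1+γ)^D * (n.choose mi:ℝ)
          ≤ (((J:ℝ)+1) * (Valid.card:ℝ)) * (n.choose mi:ℝ) := by
        calc ((G (i,X)).card : ℝ) * (1+γ)^D * (n.choose mi:ℝ)
            = (((G (i,X)).card : ℝ) * (n.choose mi:ℝ)) * (1+γ)^D := by ring
          _ = (((pC.filter (Pp (i,X))).card : ℝ) * (Valid.card : ℝ)) * (1+γ)^D := by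
              rw [hGc]
          _ = (((pC.filter (Pp (i,X))).card : ℝ) * (1+γ)^D) * (Valid.card : ℝ) := by ring
          _ ≤ (((J:ℝ)+1)*(n.choose mi:ℝ)) * (Valid.card : ℝ) :=
              mul_le_mul_of_nonneg_right h2 hVnn
          _ = (((J:ℝ)+1) * (Valid.card:ℝ)) * (n.choose mi:ℝ) := by ring
      exact le_of_mul_le_mul_right h3 hCpos
    have hDlb : (ε*c/6)*n ≤ (D:ℝ) := by
      have hDc : (D:ℝ) = (j₀:ℝ) - J := by rw [hD, Nat.cast_sub hJj₀.le]
      rw [hDc]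
      have h8 : (ε/6)*(c*(n:ℝ)) ≤ (ε/6)*mi :=
        mul_le_mul_of_nonneg_left hmilb (by positivity)
      linarith [h8, hj₀ge, hJle]
    have h1γ : (0:ℝ) < 1+γ := by linarith
    have hpow_exp : (1+γ)^D = Real.exp (β * D) := by
      rw [hβdef]
      rw [← Real.exp_log h1γ]
      rw [← Real.exp_nat_mul]
      congr 1
      rw [Real.log_exp]
      ring
    have hJn : (J:ℝ)+1 ≤ (n:ℝ)+1 := by
      have hq1 : (δ+2*ε/3)*(mi:ℝ) ≤ mi := by
        have h9 : (δ+2*ε/3)*(mi:ℝ) ≤ 1*mi :=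
          mul_le_mul_of_nonneg_right (by linarith only [hδε1, hε]) hmi0R.le
        linarith only [h9]
      linarith only [hJle, hq1, hmiubR]
    have hB : ((G (i,X)).card:ℝ) ≤ ((J:ℝ)+1)*(Valid.card:ℝ) * ((1+γ)^D)⁻¹ := by
      have h4 := mul_le_mul_of_nonneg_right hchain (inv_nonneg.mpr hpowpos.le)
      calc ((G (i,X)).card:ℝ)
          = ((G (i,X)).card:ℝ) * (1+γ)^D * ((1+γ)^D)⁻¹ := by field_simp
        _ ≤ ((J:ℝ)+1)*(Valid.card:ℝ) * ((1+γ)^D)⁻¹ := h4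
    have hexpD : ((1+γ)^D)⁻¹ ≤ Real.exp (-(β*((ε*c/6)*n))) := by
      rw [hpow_exp, ← Real.exp_neg]
      apply Real.exp_le_exp.mpr
      have h5 : β*((ε*c/6)*n) ≤ β*D := mul_le_mul_of_nonneg_left hDlb hβ0.le
      linarith only [h5]
    calc ((G (i,X)).card:ℝ) ≤ ((J:ℝ)+1)*(Valid.card:ℝ) * ((1+γ)^D)⁻¹ := hB
      _ ≤ (((n:ℝ)+1)*(Valid.card:ℝ)) * Real.exp (-(β*((ε*c/6)*n))) := by
          apply mul_le_mul (mul_le_mul hJn le_rfl hVnn (by positivity)) hexpD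
            (by positivity) (by positivity)
      _ = ((n:ℝ)+1) * Real.exp (-(β*((ε*c/6)*n))) * (Valid.card:ℝ) := by ring
  -- sum over pairs
  have hcard1 : ((Valid.filter
      (fun φ => ¬ ∀ i : Fin t, ∀ X : Finset (Fin n), X.card = k - 1 →
          (δ + 2 * ε / 3) * (m i : ℝ) ≤
            (((Finset.univ.filter (fun v => φ v = i)).filter
              (fun v => insert v X ∈ H)).card : ℝ))).card : ℝ)
      ≤ ∑ p ∈ bigset, ((G p).card : ℝ) := by
    have h1 := Finset.card_le_card hBadsub
    have h2 := Finset.card_biUnion_le (s := bigset) (t := G)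
    have h3 := le_trans h1 h2
    exact_mod_cast h3
  have hsum : (∑ p ∈ bigset, ((G p).card : ℝ))
      ≤ (bigset.card : ℝ) * (((n:ℝ)+1) * Real.exp (-(β*((ε*c/6)*n))) * (Valid.card:ℝ)) := by
    calc (∑ p ∈ bigset, ((G p).card:ℝ))
        ≤ ∑ _p ∈ bigset, (((n:ℝ)+1) * Real.exp (-(β*((ε*c/6)*n))) * (Valid.card:ℝ)) :=
          Finset.sum_le_sum hper
      _ = (bigset.card : ℝ) * (((n:ℝ)+1) * Real.exp (-(β*((ε*c/6)*n))) * (Valid.card:ℝ)) := by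
          rw [Finset.sum_const, nsmul_eq_mul]
  have hbigcard : (bigset.card : ℝ) = (t:ℝ) * (n.choose (k-1) : ℝ) := by
    rw [hbig, Finset.card_product, Finset.card_univ, Fintype.card_fin,
      Finset.card_powersetCard, Finset.card_univ, Fintype.card_fin]
    push_cast
    ring
  have htle : (t:ℝ) ≤ 1/c := by
    have h1 : (t:ℝ) * (c*n) ≤ (n:ℝ) := by
      have h2 : ∀ i ∈ (Finset.univ : Finset (Fin t)), c*n ≤ (m i : ℝ) :=
        fun i _ => hmlb i
      have h3 := Finset.card_nsmul_le_sum Finset.univ (fun i => (m i : ℝ)) (c*n) h2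
      rw [Finset.card_univ, Fintype.card_fin, nsmul_eq_mul] at h3
      have h4 : (∑ i, (m i : ℝ)) = (n:ℝ) := by exact_mod_cast congrArg (Nat.cast (R := ℝ)) hmsum
      linarith
    rw [le_div_iff₀ hc]
    have h10 : (t:ℝ)*c*n ≤ 1*n := by linarith only [h1]
    exact le_of_mul_le_mul_right h10 hn0R
  have hchoose : ((n.choose (k-1)):ℝ) ≤ ((n:ℝ)+1)^(k-1) := by
    calc ((n.choose (k-1)):ℝ) ≤ ((n:ℝ))^(k-1) := by exact_mod_cast Nat.choose_le_pow n (k-1)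
      _ ≤ ((n:ℝ)+1)^(k-1) := pow_le_pow_left₀ (by positivity) (by linarith) _
  have hK : (t:ℝ)*((n.choose (k-1)):ℝ)*(((n:ℝ)+1)) ≤ (1/c)*((n:ℝ)+1)^k := by
    have hkk : ((n:ℝ)+1)^(k-1)*((n:ℝ)+1) = ((n:ℝ)+1)^k := by
      rw [← pow_succ]
      congr 1
      omega
    calc (t:ℝ)*((n.choose (k-1)):ℝ)*(((n:ℝ)+1))
        ≤ ((1/c)*((n:ℝ)+1)^(k-1))*(((n:ℝ)+1)) := by
          apply mul_le_mul (mul_le_mul htle hchoose (by positivity) (by positivity))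
            le_rfl (by positivity) (by positivity)
      _ = (1/c)*((n:ℝ)+1)^k := by rw [mul_assoc, hkk]
  have hexpfinal : (1/c)*((n:ℝ)+1)^k * Real.exp (-(β*((ε*c/6)*n)))
      ≤ Real.exp (-(ε*c*β/12) * n) := by
    calc (1/c)*((n:ℝ)+1)^k * Real.exp (-(β*((ε*c/6)*n)))
        ≤ Real.exp ((ε*c*β/12) * n) * Real.exp (-(β*((ε*c/6)*n))) :=
          mul_le_mul_of_nonneg_right hC6 (Real.exp_nonneg _)
      _ = Real.exp (-(ε*c*β/12) * n) := by
          rw [← Real.exp_add]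
          congr 1
          ring
  calc ((Valid.filter
      (fun φ => ¬ ∀ i : Fin t, ∀ X : Finset (Fin n), X.card = k - 1 →
          (δ + 2 * ε / 3) * (m i : ℝ) ≤
            (((Finset.univ.filter (fun v => φ v = i)).filter
              (fun v => insert v X ∈ H)).card : ℝ))).card : ℝ)
      ≤ ∑ p ∈ bigset, ((G p).card : ℝ) := hcard1
    _ ≤ (bigset.card : ℝ) * (((n:ℝ)+1) * Real.exp (-(β*((ε*c/6)*n))) * (Valid.card:ℝ)) := hsum
    _ = ((t:ℝ)*((n.choose (k-1)):ℝ)*(((n:ℝ)+1))) * Real.exp (-(β*((ε*c/6)*n))) * (Valid.card:ℝ) := by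
        rw [hbigcard]; ring
    _ ≤ ((1/c)*((n:ℝ)+1)^k) * Real.exp (-(β*((ε*c/6)*n))) * (Valid.card:ℝ) := by
        apply mul_le_mul_of_nonneg_right _ (Nat.cast_nonneg _)
        exact mul_le_mul_of_nonneg_right hK (Real.exp_nonneg _)
    _ ≤ Real.exp (-(ε*c*β/12) * n) * (Valid.card:ℝ) := by
        apply mul_le_mul_of_nonneg_right _ (Nat.cast_nonneg _)
        exact hexpfinal
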